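/- The relation M₁ < M₂ defined by M₁ ⊆ A_L(M₂) is a strict partial order on any collection of pairwise disjoint separators of an open annulus A; in particular it is antisymmetric and transitive, and any two disjoint separators are comparable. -/

import Mathlib

/- Model of the open annulus A = S¹ × (0,1), with universal cover ℝ × (0,1). -/

noncomputable section
open Set Filter Topology MeasureTheory

/-- The open interval (0,1) as a type. -/
abbrev IooT : Type := ↥(Set.Ioo (0:ℝ) 1)

/-- The open annulus `A = S¹ × (0,1)`. -/
abbrev Ann : Type := AddCircle (1:ℝ) × IooT

/-- The universal cover `Ã = ℝ × (0,1)` of the open annulus. -/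
abbrev Cov : Type := ℝ × IooT

/-- The covering projection `Ã → A`. -/
def proj : Cov → Ann := fun z => ((z.1 : AddCircle (1:ℝ)), z.2)

/-- An arc (curve) in `A` connecting the left end (y → 0) to the right end (y → 1). -/
def ConnectsEnds (γ : ℝ → Ann) : Prop :=
  Continuous γ ∧ Filter.Tendsto (fun t => ((γ t).2 : ℝ)) Filter.atBot (nhds 0) ∧
    Filter.Tendsto (fun t => ((γ t).2 : ℝ)) Filter.atTop (nhds 1)

/-- A subset of the annulus is separating (essential) if every arc connecting
the two ends of `A` meets it. -/
def Separating (M : Set Ann) : Prop := ∀ γ : ℝ → Ann, ConnectsEnds γ → ∃ t, γ t ∈ M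

/-- A separator: a compact, connected, separating subset of the annulus. -/
def IsSeparator (M : Set Ann) : Prop := IsCompact M ∧ IsConnected M ∧ Separating M

/-- A set contains the left end of the annulus. -/
def ContainsLeftEnd (U : Set Ann) : Prop := ∃ ε > (0:ℝ), ∀ p : Ann, ((p.2 : ℝ) < ε) → p ∈ U

/-- A set contains the right end of the annulus. -/
def ContainsRightEnd (U : Set Ann) : Prop := ∃ ε > (0:ℝ), ∀ p : Ann, (1 - ε < (p.2 : ℝ)) → p ∈ U

/-- `U` is a connected component of the complement of `M`. -/
def IsComponentOfCompl (M U : Set Ann) : Prop := ∃ p, p ∉ M ∧ U = connectedComponentIn Mᶜ p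

/-- `U` is the component of `A − M` containing the left end (`A_L(M)`). -/
def IsLeftComponent (M U : Set Ann) : Prop := IsComponentOfCompl M U ∧ ContainsLeftEnd U

/-- `U` is the component of `A − M` containing the right end (`A_R(M)`). -/
def IsRightComponent (M U : Set Ann) : Prop := IsComponentOfCompl M U ∧ ContainsRightEnd U

/-- The ordering on separators: `M₁ < M₂` iff `M₁ ⊆ A_L(M₂)`. -/
def SepLt (M₁ M₂ : Set Ann) : Prop := ∃ U : Set Ann, IsLeftComponent M₂ U ∧ M₁ ⊆ U

instance : LocallyPathConnectedSpace IooT := isOpen_Ioo.locPathConnectedSpace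
instance : LocallyPathConnectedSpace (AddCircle (1:ℝ)) :=
  inferInstanceAs (LocallyPathConnectedSpace (Quotient _))

theorem IsPathConnected.prodSet {X Y} [TopologicalSpace X] [TopologicalSpace Y]
    {s : Set X} {t : Set Y} (hs : IsPathConnected s) (ht : IsPathConnected t) :
    IsPathConnected (s ×ˢ t) := by
  obtain ⟨x, hx, hjs⟩ := hs
  obtain ⟨y, hy, hjt⟩ := ht
  refine ⟨(x, y), ⟨hx, hy⟩, ?_⟩
  rintro ⟨x', y'⟩ ⟨hx', hy'⟩
  obtain ⟨γ₁, hγ₁⟩ := hjs hx'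
  obtain ⟨γ₂, hγ₂⟩ := hjt hy'
  exact ⟨γ₁.prod γ₂, fun u => ⟨hγ₁ u, hγ₂ u⟩⟩

instance Prod.locPathConnectedSpace' {X Y} [TopologicalSpace X] [TopologicalSpace Y]
    [LocallyPathConnectedSpace X] [LocallyPathConnectedSpace Y] :
    LocallyPathConnectedSpace (X × Y) :=
  .of_bases (fun z => (path_connected_basis z.1).prod_nhds (path_connected_basis z.2))
    (fun _ _ ⟨⟨_, hs⟩, ⟨_, ht⟩⟩ => hs.prodSet ht)

instance : ConnectedSpace IooT := Subtype.connectedSpace (isConnected_Ioo one_pos)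

lemma ann_y_cont : Continuous fun p : Ann => ((p.2 : ℝ)) :=
  continuous_subtype_val.comp continuous_snd

/-- the vertical segment path in the annulus -/
def segPath (y₁ y₂ : IooT) : Path y₁ y₂ where
  toFun t := ⟨(1 - (t:ℝ)) * (y₁:ℝ) + (t:ℝ) * (y₂:ℝ), by
    simpa [smul_eq_mul] using
      (convex_Ioo (0:ℝ) 1) y₁.2 y₂.2 (sub_nonneg.2 t.2.2) t.2.1 (by ring)⟩
  continuous_toFun := by
    apply Continuous.subtype_mk
    fun_prop
  source' := by ext; simp
  target' := by ext; simp

lemma joinedIn_strip (x₁ x₂ : AddCircle (1:ℝ)) (y₁ y₂ : IooT) (s : Set ℝ)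
    (hs : Convex ℝ s) (h₁ : (y₁:ℝ) ∈ s) (h₂ : (y₂:ℝ) ∈ s) :
    JoinedIn {p : Ann | ((p.2:ℝ)) ∈ s} (x₁, y₁) (x₂, y₂) := by
  refine ⟨(PathConnectedSpace.somePath x₁ x₂).prod (segPath y₁ y₂), fun t => ?_⟩
  simpa [segPath, smul_eq_mul] using
    hs h₁ h₂ (sub_nonneg.2 t.2.2) t.2.1 (by ring)

lemma strip_preconnected (s : Set ℝ) (hs : Convex ℝ s) :
    IsPreconnected {p : Ann | ((p.2:ℝ)) ∈ s} := by
  rcases eq_empty_or_nonempty {p : Ann | ((p.2:ℝ)) ∈ s} with h | ⟨⟨x, y⟩, hy⟩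
  · rw [h]; exact isPreconnected_empty
  · refine IsPathConnected.isConnected ⟨(x,y), hy, ?_⟩ |>.isPreconnected
    rintro ⟨x', y'⟩ hy'
    exact joinedIn_strip x x' y y' s hs hy hy'

lemma exists_arc (U : Set Ann) {yl yr : ℝ} (hyl : yl ∈ Set.Ioo (0:ℝ) 1)
    (hyr : yr ∈ Set.Ioo (0:ℝ) 1)
    (hJ : JoinedIn U ((0 : AddCircle (1:ℝ)), ⟨yl, hyl⟩) ((0 : AddCircle (1:ℝ)), ⟨yr, hyr⟩)) :
    ∃ γ : ℝ → Ann, ConnectsEnds γ ∧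
      ∀ t, γ t ∈ U ∨ ((γ t).2 : ℝ) ≤ yl ∨ yr ≤ ((γ t).2 : ℝ) := by
  obtain ⟨P, hP⟩ := hJ
  set f : ℝ → Ann := fun t => ((0 : AddCircle (1:ℝ)),
    ⟨min yl (yl * Real.exp t), by
      constructor
      · exact lt_min hyl.1 (mul_pos hyl.1 (Real.exp_pos t))
      · exact lt_of_le_of_lt (min_le_left _ _) hyl.2⟩) with hf
  set h : ℝ → Ann := fun t => ((0 : AddCircle (1:ℝ)),
    ⟨max yr (1 - (1 - yr) * Real.exp (1 - t)), by
      constructor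
      · exact lt_max_of_lt_left hyr.1
      · exact max_lt hyr.2 (by nlinarith [mul_pos (sub_pos.2 hyr.2) (Real.exp_pos (1-t))])⟩)
    with hh
  set g : ℝ → Ann := fun t => P (Set.projIcc (0:ℝ) 1 zero_le_one t) with hg
  set γ : ℝ → Ann := fun t => if t ≤ 0 then f t else if t ≤ 1 then g t else h t with hγ
  have hfc : Continuous f := by
    apply continuous_const.prodMk
    apply Continuous.subtype_mk
    fun_prop
  have hhc : Continuous h := by
    apply continuous_const.prodMk
    apply Continuous.subtype_mk
    fun_prop
  have hgc : Continuous g := P.continuous.comp continuous_projIcc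
  have hgih : Continuous fun t => if t ≤ 1 then g t else h t := by
    apply Continuous.if_le hgc hhc continuous_id continuous_const
    intro x hx
    subst hx
    have : g 1 = ((0 : AddCircle (1:ℝ)), ⟨yr, hyr⟩) := by
      simp only [hg, Set.projIcc, max_def, min_def]
      norm_num
    rw [this]
    simp only [hh]
    congr 1
    ext
    simp
  have hγc : Continuous γ := by
    apply Continuous.if_le hfc hgih continuous_id continuous_const
    intro x hx
    subst hx
    have hg0 : (if (0:ℝ) ≤ 1 then g 0 else h 0) = g 0 := by norm_num
    rw [hg0]
    have : g 0 = ((0 : AddCircle (1:ℝ)), ⟨yl, hyl⟩) := by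
      simp only [hg, Set.projIcc, max_def, min_def]
      norm_num
    rw [this]
    simp only [hf]
    congr 1
    ext
    simp [Real.exp_zero]
  refine ⟨γ, ⟨hγc, ?_, ?_⟩, ?_⟩
  · -- atBot
    have h1 : Tendsto (fun t => min yl (yl * Real.exp t)) atBot (nhds 0) := by
      have : Tendsto (fun t => yl * Real.exp t) atBot (nhds (yl * 0)) :=
        (Real.tendsto_exp_atBot).const_mul yl
      rw [mul_zero] at this
      have := tendsto_const_nhds (x := yl) (f := atBot (α := ℝ)) |>.min this
      rwa [min_eq_right hyl.1.le] at this
    apply h1.congr'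
    filter_upwards [eventually_le_atBot (0:ℝ)] with t ht
    simp [hγ, ht, hf]
  · -- atTop
    have h1 : Tendsto (fun t => max yr (1 - (1 - yr) * Real.exp (1 - t))) atTop (nhds 1) := by
      have he : Tendsto (fun t : ℝ => Real.exp (1 - t)) atTop (nhds 0) :=
        Real.tendsto_exp_atBot.comp (tendsto_atBot_add_const_left _ 1 tendsto_neg_atTop_atBot
          |>.congr (fun t => by ring_nf))
      have : Tendsto (fun t => 1 - (1 - yr) * Real.exp (1 - t)) atTop (nhds (1 - (1-yr) * 0)) :=
        tendsto_const_nhds.sub ((he).const_mul (1 - yr))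
      rw [mul_zero, sub_zero] at this
      have := tendsto_const_nhds (x := yr) (f := atTop (α := ℝ)) |>.max this
      rwa [max_eq_right hyr.2.le] at this
    apply h1.congr'
    filter_upwards [eventually_ge_atTop (2:ℝ)] with t ht
    have h0 : ¬ t ≤ 0 := by linarith
    have h1' : ¬ t ≤ 1 := by linarith
    simp [hγ, h0, h1', hh]
  · intro t
    by_cases h0 : t ≤ 0
    · right; left; simp [hγ, h0, hf, min_le_left]
    · by_cases h1 : t ≤ 1
      · left; simp only [hγ, h0, h1, if_false, if_true]; exact hP _
      · right; right; simp [hγ, h0, h1, hh, le_max_left]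


/-- vertical bounds of a compact subset of the annulus -/
lemma bounds {M : Set Ann} (hM : IsCompact M) :
    ∃ a b : ℝ, 0 < a ∧ a ≤ b ∧ b < 1 ∧ ∀ p ∈ M, a ≤ (p.2:ℝ) ∧ (p.2:ℝ) ≤ b := by
  rcases M.eq_empty_or_nonempty with rfl | hne
  · exact ⟨1/2, 1/2, by norm_num, le_refl _, by norm_num, by simp⟩
  · set K := (fun p : Ann => ((p.2:ℝ))) '' M with hK
    have hKc : IsCompact K := hM.image ann_y_cont
    have hKne : K.Nonempty := hne.image _
    have hmem : ∀ y ∈ K, y ∈ Set.Ioo (0:ℝ) 1 := by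
      rintro y ⟨p, _, rfl⟩; exact p.2.2
    refine ⟨sInf K, sSup K, (hmem _ (hKc.sInf_mem hKne)).1, ?_, (hmem _ (hKc.sSup_mem hKne)).2, ?_⟩
    · exact csInf_le_csSup hKne hKc.bddBelow hKc.bddAbove
    · intro p hp
      exact ⟨csInf_le hKc.bddBelow ⟨p, hp, rfl⟩, le_csSup hKc.bddAbove ⟨p, hp, rfl⟩⟩

/-- a point near the left end -/
def lpt (δ : ℝ) (h : 0 < δ) : Ann :=
  ((0 : AddCircle (1:ℝ)), ⟨min δ 1 / 2, by
    constructor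
    · have := lt_min h one_pos; linarith
    · have := min_le_right δ 1; linarith⟩)

lemma lpt_lt {δ : ℝ} (h : 0 < δ) : (((lpt δ h).2 : ℝ)) < δ := by
  simp only [lpt]
  have := min_le_left δ 1; linarith

/-- a point near the right end -/
def rpt (δ : ℝ) (h : 0 < δ) : Ann :=
  ((0 : AddCircle (1:ℝ)), ⟨1 - min δ 1 / 2, by
    constructor
    · have := min_le_right δ 1; linarith
    · have := lt_min h one_pos; linarith⟩)

lemma rpt_gt {δ : ℝ} (h : 0 < δ) : 1 - δ < (((rpt δ h).2 : ℝ)) := by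
  simp only [rpt]
  have := min_le_left δ 1; linarith

lemma sep_nonempty {M : Set Ann} (hM : IsSeparator M) : M.Nonempty := by
  have h2 : (1:ℝ)/2 ∈ Set.Ioo (0:ℝ) 1 := by norm_num
  obtain ⟨γ, hγ, -⟩ := exists_arc Set.univ h2 h2 (JoinedIn.refl (Set.mem_univ _))
  obtain ⟨t, ht⟩ := hM.2.2 γ hγ
  exact ⟨γ t, ht⟩

/-- **Key lemma**: no component of the complement of a separator contains both ends. -/
lemma no_both_ends {M U : Set Ann} (hM : IsSeparator M) (hU : IsComponentOfCompl M U)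
    (hL : ContainsLeftEnd U) (hR : ContainsRightEnd U) : False := by
  obtain ⟨p, hp, rfl⟩ := hU
  obtain ⟨a, b, ha, hab, hb, hbound⟩ := bounds hM.1
  obtain ⟨εl, hεl, hεlU⟩ := hL
  obtain ⟨εr, hεr, hεrU⟩ := hR
  have hWopen : IsOpen Mᶜ := hM.1.isClosed.isOpen_compl
  have hUopen : IsOpen (connectedComponentIn Mᶜ p) := hWopen.connectedComponentIn
  have hUconn : IsConnected (connectedComponentIn Mᶜ p) :=
    isConnected_connectedComponentIn_iff.2 hp
  have hUpath : IsPathConnected (connectedComponentIn Mᶜ p) :=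
    (hUopen.isConnected_iff_isPathConnected).1 hUconn
  -- choose yl, yr
  set yl : ℝ := min εl a / 2 with hyl'
  have hyl : yl ∈ Set.Ioo (0:ℝ) 1 := by
    constructor
    · have := lt_min hεl ha; simp only [hyl']; linarith
    · have h1 := min_le_right εl a; simp only [hyl']; linarith
  have hyla : yl < a := by have := min_le_right εl a; simp only [hyl']; linarith
  have hylε : yl < εl := by have := min_le_left εl a; simp only [hyl']; linarith
  set yr : ℝ := (max (1 - εr) b + 1) / 2 with hyr'
  have hmax1 : max (1 - εr) b < 1 := max_lt (by linarith) hb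
  have hyr : yr ∈ Set.Ioo (0:ℝ) 1 := by
    constructor
    · have := le_max_right (1 - εr) b; simp only [hyr']; linarith
    · simp only [hyr']; linarith
  have hyrb : b < yr := by have := le_max_right (1 - εr) b; simp only [hyr']; linarith
  have hyrε : 1 - εr < yr := by have := le_max_left (1 - εr) b; simp only [hyr']; linarith
  have hplU : ((0 : AddCircle (1:ℝ)), (⟨yl, hyl⟩ : IooT)) ∈ connectedComponentIn Mᶜ p :=
    hεlU _ hylε
  have hprU : ((0 : AddCircle (1:ℝ)), (⟨yr, hyr⟩ : IooT)) ∈ connectedComponentIn Mᶜ p :=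
    hεrU _ hyrε
  obtain ⟨γ, hγ, hγmem⟩ := exists_arc _ hyl hyr (hUpath.joinedIn _ hplU _ hprU)
  obtain ⟨t, ht⟩ := hM.2.2 γ hγ
  rcases hγmem t with h | h | h
  · exact (connectedComponentIn_subset Mᶜ p h) ht
  · have := (hbound _ ht).1; linarith
  · have := (hbound _ ht).2; linarith

lemma ccIn_eq_ccIn {W : Set Ann} {p q z : Ann} (hzp : z ∈ connectedComponentIn W p)
    (hzq : z ∈ connectedComponentIn W q) :
    connectedComponentIn W p = connectedComponentIn W q := by
  rw [connectedComponentIn_eq hzp, connectedComponentIn_eq hzq]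

lemma closure_ccIn_subset {W : Set Ann} (hW : IsOpen W) (x : Ann) :
    closure (connectedComponentIn W x) ⊆ connectedComponentIn W x ∪ Wᶜ := by
  intro z hz
  by_contra hcon
  rw [Set.mem_union, not_or] at hcon
  obtain ⟨hz1, hz2⟩ := hcon
  have hzW : z ∈ W := by simpa using hz2
  have hop : IsOpen (connectedComponentIn W z) := hW.connectedComponentIn
  obtain ⟨w, hw1, hw2⟩ := mem_closure_iff.1 hz _ hop (mem_connectedComponentIn hzW)
  exact hz1 (by
    rw [connectedComponentIn_eq hw2, ← connectedComponentIn_eq hw1]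
    exact mem_connectedComponentIn hzW)

lemma closure_meets {M : Set Ann} (hMc : IsClosed M) (hMne : M.Nonempty) {x : Ann}
    (hx : x ∉ M) : (closure (connectedComponentIn Mᶜ x) ∩ M).Nonempty := by
  by_contra h
  rw [Set.not_nonempty_iff_eq_empty] at h
  set V := connectedComponentIn Mᶜ x with hV
  have hcl : closure V ⊆ V := by
    intro z hz
    rcases closure_ccIn_subset hMc.isOpen_compl x hz with h1 | h1
    · exact h1
    · exact absurd (Set.eq_empty_iff_forall_notMem.1 h z ⟨hz, by simpa using h1⟩) (by simp)
  have hclopen : IsClopen V :=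
    ⟨isClosed_of_closure_subset hcl, hMc.isOpen_compl.connectedComponentIn⟩
  have hVne : V.Nonempty := ⟨x, mem_connectedComponentIn hx⟩
  have := hclopen.eq_univ hVne
  obtain ⟨m, hm⟩ := hMne
  have : m ∈ V := this ▸ Set.mem_univ m
  exact (connectedComponentIn_subset _ _ this) hm

lemma union_preconnected {M : Set Ann} (hMc : IsClosed M) (hMne : M.Nonempty)
    (hMconn : IsPreconnected M) {x : Ann} (hx : x ∉ M) :
    IsPreconnected (M ∪ connectedComponentIn Mᶜ x) := by
  set V := connectedComponentIn Mᶜ x with hV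
  have hkey : M ∪ V = M ∪ closure V := by
    apply Set.Subset.antisymm (Set.union_subset_union_right M subset_closure)
    apply Set.union_subset Set.subset_union_left
    intro z hz
    rcases closure_ccIn_subset hMc.isOpen_compl x hz with h1 | h1
    · exact Or.inr h1
    · exact Or.inl (by simpa using h1)
  rw [hkey]
  obtain ⟨z, hz1, hz2⟩ := closure_meets hMc hMne hx
  exact hMconn.union z hz2 hz1 isPreconnected_connectedComponentIn.closure

lemma exists_left {M : Set Ann} (hM : IsCompact M) : ∃ U, IsLeftComponent M U := by
  obtain ⟨a, b, ha, hab, hb, hbound⟩ := bounds hM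
  refine ⟨connectedComponentIn Mᶜ (lpt a ha), ⟨⟨lpt a ha, ?_, rfl⟩, a, ha, ?_⟩⟩
  · intro h; have := (hbound _ h).1; have := lpt_lt ha; linarith
  · intro p hp
    have hsub : {q : Ann | ((q.2:ℝ)) ∈ Set.Iio a} ⊆ Mᶜ := by
      intro q hq hqM; have := (hbound _ hqM).1; exact absurd hq (by simp; linarith)
    exact (strip_preconnected _ (convex_Iio a)).subset_connectedComponentIn
      (lpt_lt ha) hsub hp

lemma exists_right {M : Set Ann} (hM : IsCompact M) : ∃ U, IsRightComponent M U := by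
  obtain ⟨a, b, ha, hab, hb, hbound⟩ := bounds hM
  have hb' : (0:ℝ) < 1 - b := by linarith
  refine ⟨connectedComponentIn Mᶜ (rpt (1-b) hb'), ⟨⟨rpt (1-b) hb', ?_, rfl⟩, 1-b, hb', ?_⟩⟩
  · intro h; have := (hbound _ h).2; have := rpt_gt hb'; simp at this; linarith
  · intro p hp
    simp only [sub_sub_cancel] at hp
    have hsub : {q : Ann | ((q.2:ℝ)) ∈ Set.Ioi b} ⊆ Mᶜ := by
      intro q hq hqM; have := (hbound _ hqM).2; exact absurd hq (by simp; linarith)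
    have h2 : ((rpt (1-b) hb').2:ℝ) ∈ Set.Ioi b := by
      have := rpt_gt hb'; simp only [sub_sub_cancel] at this; exact this
    exact (strip_preconnected _ (convex_Ioi b)).subset_connectedComponentIn h2 hsub hp

lemma lr_disjoint {M U V : Set Ann} (hM : IsSeparator M) (hU : IsLeftComponent M U)
    (hV : IsRightComponent M V) : Disjoint U V := by
  rw [Set.disjoint_left]
  intro z hzU hzV
  obtain ⟨⟨p, hp, rfl⟩, hUL⟩ := hU
  obtain ⟨⟨q, hq, hVq⟩, hVR⟩ := hV
  subst hVq
  exact no_both_ends hM ⟨p, hp, rfl⟩ hUL (ccIn_eq_ccIn hzU hzV ▸ hVR)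

lemma side_right {M₁ M₂ U₂ V₁ : Set Ann} (hM₁ : IsSeparator M₁) (hM₂ : IsSeparator M₂)
    (hdis : Disjoint M₁ M₂) (hU₂ : IsLeftComponent M₂ U₂) (h12 : M₁ ⊆ U₂)
    (hV₁ : IsRightComponent M₁ V₁) : M₂ ⊆ V₁ := by
  obtain ⟨V₂, hV₂⟩ := exists_right hM₂.1
  have hd : Disjoint U₂ V₂ := lr_disjoint hM₂ hU₂ hV₂
  obtain ⟨⟨q₂, hq₂, rfl⟩, ε₂, hε₂, hε₂V⟩ := hV₂
  obtain ⟨⟨p₁, hp₁, rfl⟩, ε₁, hε₁, hε₁V⟩ := hV₁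
  set V₂ := connectedComponentIn M₂ᶜ q₂
  set S := M₂ ∪ V₂ with hS
  have hSpre : IsPreconnected S :=
    union_preconnected hM₂.1.isClosed (sep_nonempty hM₂) hM₂.2.1.isPreconnected hq₂
  have hSsub : S ⊆ M₁ᶜ := by
    apply Set.union_subset
    · exact Set.subset_compl_iff_disjoint_left.2 hdis
    · intro z hz hzM₁
      exact Set.disjoint_left.1 hd (h12 hzM₁) hz
  have hpos : (0:ℝ) < min ε₂ ε₁ := lt_min hε₂ hε₁
  set r := rpt _ hpos with hr
  have hrV₂ : r ∈ V₂ := hε₂V _ (by have := rpt_gt hpos; have := min_le_left ε₂ ε₁; linarith)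
  have hrV₁ : r ∈ connectedComponentIn M₁ᶜ p₁ :=
    hε₁V _ (by have := rpt_gt hpos; have := min_le_right ε₂ ε₁; linarith)
  have hrM₁ : r ∈ M₁ᶜ := connectedComponentIn_subset _ _ hrV₁
  have hsub : S ⊆ connectedComponentIn M₁ᶜ r :=
    hSpre.subset_connectedComponentIn (Set.mem_union_right _ hrV₂) hSsub
  rw [ccIn_eq_ccIn (mem_connectedComponentIn hrM₁) hrV₁] at hsub
  exact fun z hz => hsub (Set.mem_union_left _ hz)

lemma side_left {M₁ M₂ V₂ U₁ : Set Ann} (hM₁ : IsSeparator M₁) (hM₂ : IsSeparator M₂)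
    (hdis : Disjoint M₁ M₂) (hV₂ : IsRightComponent M₂ V₂) (h12 : M₁ ⊆ V₂)
    (hU₁ : IsLeftComponent M₁ U₁) : M₂ ⊆ U₁ := by
  obtain ⟨U₂, hU₂⟩ := exists_left hM₂.1
  have hd : Disjoint U₂ V₂ := lr_disjoint hM₂ hU₂ hV₂
  obtain ⟨⟨q₂, hq₂, rfl⟩, ε₂, hε₂, hε₂V⟩ := hU₂
  obtain ⟨⟨p₁, hp₁, rfl⟩, ε₁, hε₁, hε₁V⟩ := hU₁
  set U₂ := connectedComponentIn M₂ᶜ q₂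
  set S := M₂ ∪ U₂ with hS
  have hSpre : IsPreconnected S :=
    union_preconnected hM₂.1.isClosed (sep_nonempty hM₂) hM₂.2.1.isPreconnected hq₂
  have hSsub : S ⊆ M₁ᶜ := by
    apply Set.union_subset
    · exact Set.subset_compl_iff_disjoint_left.2 hdis
    · intro z hz hzM₁
      exact Set.disjoint_right.1 hd (h12 hzM₁) hz
  have hpos : (0:ℝ) < min ε₂ ε₁ := lt_min hε₂ hε₁
  set r := lpt _ hpos with hr
  have hrU₂ : r ∈ U₂ := hε₂V _ (by have := lpt_lt hpos; have := min_le_left ε₂ ε₁; linarith)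
  have hrU₁ : r ∈ connectedComponentIn M₁ᶜ p₁ :=
    hε₁V _ (by have := lpt_lt hpos; have := min_le_right ε₂ ε₁; linarith)
  have hrM₁ : r ∈ M₁ᶜ := connectedComponentIn_subset _ _ hrU₁
  have hsub : S ⊆ connectedComponentIn M₁ᶜ r :=
    hSpre.subset_connectedComponentIn (Set.mem_union_right _ hrU₂) hSsub
  rw [ccIn_eq_ccIn (mem_connectedComponentIn hrM₁) hrU₁] at hsub
  exact fun z hz => hsub (Set.mem_union_left _ hz)

lemma sepLt_irrefl {M : Set Ann} (hM : IsSeparator M) : ¬ SepLt M M := by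
  rintro ⟨U, ⟨⟨p, hp, rfl⟩, -⟩, hMU⟩
  obtain ⟨m, hm⟩ := sep_nonempty hM
  exact (connectedComponentIn_subset _ _ (hMU hm)) hm

lemma sepLt_antisymm {M₁ M₂ : Set Ann} (hM₁ : IsSeparator M₁) (hM₂ : IsSeparator M₂)
    (hdis : Disjoint M₁ M₂) : ¬ (SepLt M₁ M₂ ∧ SepLt M₂ M₁) := by
  rintro ⟨⟨U₂, hU₂, h12⟩, ⟨U₁, hU₁, h21⟩⟩
  obtain ⟨V₁, hV₁⟩ := exists_right hM₁.1
  have h2V : M₂ ⊆ V₁ := side_right hM₁ hM₂ hdis hU₂ h12 hV₁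
  have hd : Disjoint U₁ V₁ := lr_disjoint hM₁ hU₁ hV₁
  obtain ⟨m, hm⟩ := sep_nonempty hM₂
  exact Set.disjoint_left.1 hd (h21 hm) (h2V hm)

lemma sepLt_trans {M₁ M₂ M₃ : Set Ann} (hM₁ : IsSeparator M₁) (hM₂ : IsSeparator M₂)
    (hM₃ : IsSeparator M₃) (h12d : Disjoint M₁ M₂) (h23d : Disjoint M₂ M₃)
    (h13d : Disjoint M₁ M₃) (h12 : SepLt M₁ M₂) (h23 : SepLt M₂ M₃) : SepLt M₁ M₃ := by
  obtain ⟨U₂, hU₂, h12'⟩ := h12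
  obtain ⟨U₃, hU₃, h23'⟩ := h23
  obtain ⟨V₂, hV₂⟩ := exists_right hM₂.1
  have h3V₂ : M₃ ⊆ V₂ := side_right hM₂ hM₃ h23d hU₃ h23' hV₂
  have hd : Disjoint U₂ V₂ := lr_disjoint hM₂ hU₂ hV₂
  refine ⟨U₃, hU₃, ?_⟩
  obtain ⟨⟨q₂, hq₂, rfl⟩, ε₂, hε₂, hε₂U⟩ := hU₂
  obtain ⟨⟨p₃, hp₃, rfl⟩, ε₃, hε₃, hε₃U⟩ := hU₃
  set U₂ := connectedComponentIn M₂ᶜ q₂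
  set S := M₂ ∪ U₂ with hS
  have hSpre : IsPreconnected S :=
    union_preconnected hM₂.1.isClosed (sep_nonempty hM₂) hM₂.2.1.isPreconnected hq₂
  have hSsub : S ⊆ M₃ᶜ := by
    apply Set.union_subset
    · exact Set.subset_compl_iff_disjoint_left.2 h23d.symm
    · intro z hz hzM₃
      exact Set.disjoint_left.1 hd hz (h3V₂ hzM₃)
  have hpos : (0:ℝ) < min ε₂ ε₃ := lt_min hε₂ hε₃
  set r := lpt _ hpos with hr
  have hrU₂ : r ∈ U₂ := hε₂U _ (by have := lpt_lt hpos; have := min_le_left ε₂ ε₃; linarith)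
  have hrU₃ : r ∈ connectedComponentIn M₃ᶜ p₃ :=
    hε₃U _ (by have := lpt_lt hpos; have := min_le_right ε₂ ε₃; linarith)
  have hrM₃ : r ∈ M₃ᶜ := connectedComponentIn_subset _ _ hrU₃
  have hsub : S ⊆ connectedComponentIn M₃ᶜ r :=
    hSpre.subset_connectedComponentIn (Set.mem_union_right _ hrU₂) hSsub
  rw [ccIn_eq_ccIn (mem_connectedComponentIn hrM₃) hrU₃] at hsub
  exact fun z hz => hsub (Set.mem_union_right _ (h12' hz))

lemma compl_ccIn_preconnected {M : Set Ann} (hM : IsSeparator M) {x : Ann} (hx : x ∉ M) :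
    IsPreconnected (connectedComponentIn Mᶜ x)ᶜ := by
  set C := connectedComponentIn Mᶜ x with hC
  obtain ⟨m₀, hm₀⟩ := sep_nonempty hM
  have hEq : Cᶜ = ⋃₀ (insert M ((fun z => M ∪ connectedComponentIn Mᶜ z) '' (Mᶜ \ C))) := by
    ext z
    constructor
    · intro hz
      by_cases hzM : z ∈ M
      · exact ⟨M, Set.mem_insert _ _, hzM⟩
      · refine ⟨M ∪ connectedComponentIn Mᶜ z, Set.mem_insert_of_mem _ ⟨z, ⟨hzM, hz⟩, rfl⟩, ?_⟩
        exact Set.mem_union_right _ (mem_connectedComponentIn hzM)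
    · rintro ⟨s, hs, hzs⟩
      rcases Set.mem_insert_iff.1 hs with hsM | ⟨z', hz'mem, hseq⟩
      · exact fun hzC => (connectedComponentIn_subset _ x hzC) (hsM ▸ hzs)
      · obtain ⟨hz'M, hz'C⟩ := hz'mem
        rw [← hseq] at hzs
        rcases hzs with hzM | hzcc
        · exact fun hzC => (connectedComponentIn_subset Mᶜ x hzC) hzM
        · intro hzC
          exact hz'C (by
            rw [hC, connectedComponentIn_eq hzC, ← connectedComponentIn_eq hzcc]
            exact mem_connectedComponentIn hz'M)
  rw [hEq]
  apply isPreconnected_sUnion m₀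
  · intro s hs
    rcases Set.mem_insert_iff.1 hs with hsM | ⟨z', hz', hseq⟩
    · rw [hsM]; exact hm₀
    · rw [← hseq]; exact Set.mem_union_left _ hm₀
  · intro s hs
    rcases Set.mem_insert_iff.1 hs with hsM | ⟨z', hz'mem, hseq⟩
    · rw [hsM]; exact hM.2.1.isPreconnected
    · rw [← hseq]
      exact union_preconnected hM.1.isClosed (sep_nonempty hM) hM.2.1.isPreconnected hz'mem.1

lemma sepLt_total {M₁ M₂ : Set Ann} (hM₁ : IsSeparator M₁) (hM₂ : IsSeparator M₂)
    (hdis : Disjoint M₁ M₂) : SepLt M₁ M₂ ∨ SepLt M₂ M₁ := by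
  obtain ⟨U₂, hU₂⟩ := exists_left hM₂.1
  obtain ⟨V₂, hV₂⟩ := exists_right hM₂.1
  obtain ⟨m, hm⟩ := sep_nonempty hM₁
  have hsub1 : M₁ ⊆ M₂ᶜ := Set.subset_compl_iff_disjoint_right.2 hdis
  have hmc : m ∈ M₂ᶜ := hsub1 hm
  set C := connectedComponentIn M₂ᶜ m with hCdef
  have hM₁C : M₁ ⊆ C := hM₁.2.1.isPreconnected.subset_connectedComponentIn hm hsub1
  by_cases hUC : (U₂ ∩ C).Nonempty
  · obtain ⟨z, hzU, hzC⟩ := hUC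
    obtain ⟨⟨p₂, hp₂, hU₂eq⟩, hU₂L⟩ := hU₂
    have : U₂ = C := by rw [hU₂eq] at hzU ⊢; exact ccIn_eq_ccIn hzU hzC
    exact Or.inl ⟨U₂, ⟨⟨p₂, hp₂, hU₂eq⟩, hU₂L⟩, this ▸ hM₁C⟩
  by_cases hVC : (V₂ ∩ C).Nonempty
  · obtain ⟨z, hzV, hzC⟩ := hVC
    obtain ⟨⟨q₂, hq₂, hV₂eq⟩, hV₂R⟩ := hV₂
    have hVeq : V₂ = C := by rw [hV₂eq] at hzV ⊢; exact ccIn_eq_ccIn hzV hzC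
    obtain ⟨U₁, hU₁⟩ := exists_left hM₁.1
    exact Or.inr ⟨U₁, hU₁,
      side_left hM₁ hM₂ hdis ⟨⟨q₂, hq₂, hV₂eq⟩, hV₂R⟩ (hVeq ▸ hM₁C) hU₁⟩
  exfalso
  rw [Set.not_nonempty_iff_eq_empty] at hUC hVC
  obtain ⟨a₁, b₁, ha₁, hab₁, hb₁, hbound₁⟩ := bounds hM₁.1
  obtain ⟨hU₂comp, ε₂, hε₂, hεU₂⟩ := hU₂
  obtain ⟨hV₂comp, δ₂, hδ₂, hδV₂⟩ := hV₂
  -- left common point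
  have hδl : (0:ℝ) < min ε₂ a₁ := lt_min hε₂ ha₁
  set q := lpt _ hδl with hq
  have hqy : ((q.2:ℝ)) < min ε₂ a₁ := lpt_lt hδl
  have hqU₂ : q ∈ U₂ := hεU₂ _ (by have := min_le_left ε₂ a₁; linarith)
  have hqC : q ∉ C := fun h => by
    rw [Set.eq_empty_iff_forall_notMem] at hUC; exact hUC q ⟨hqU₂, h⟩
  have hqM₁ : q ∉ M₁ := fun h => by
    have := (hbound₁ _ h).1; have := min_le_right ε₂ a₁; linarith
  set W := connectedComponentIn M₁ᶜ q with hW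
  have hCc_pre : IsPreconnected Cᶜ := compl_ccIn_preconnected hM₂ hmc
  have hCcM₁ : Cᶜ ⊆ M₁ᶜ := Set.compl_subset_compl.2 hM₁C
  have hWsub : Cᶜ ⊆ W := hCc_pre.subset_connectedComponentIn hqC hCcM₁
  -- right common point
  have hδr : (0:ℝ) < min δ₂ (1 - b₁) := lt_min hδ₂ (by linarith)
  set r := rpt _ hδr with hr
  have hry : 1 - min δ₂ (1 - b₁) < ((r.2:ℝ)) := rpt_gt hδr
  have hrV₂ : r ∈ V₂ := hδV₂ _ (by have := min_le_left δ₂ (1 - b₁); linarith)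
  have hrC : r ∉ C := fun h => by
    rw [Set.eq_empty_iff_forall_notMem] at hVC; exact hVC r ⟨hrV₂, h⟩
  have hrW : r ∈ W := hWsub hrC
  -- W contains both ends
  have hWleft : ContainsLeftEnd W := by
    refine ⟨min ε₂ a₁, hδl, fun p hp => ?_⟩
    have hstrip : {s : Ann | ((s.2:ℝ)) ∈ Set.Iio (min ε₂ a₁)} ⊆ M₁ᶜ := by
      intro s hs hsM₁
      have := (hbound₁ _ hsM₁).1; have := min_le_right ε₂ a₁
      simp only [Set.mem_setOf_eq, Set.mem_Iio] at hs; linarith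
    exact (strip_preconnected _ (convex_Iio _)).subset_connectedComponentIn hqy hstrip hp
  have hWright : ContainsRightEnd W := by
    refine ⟨min δ₂ (1 - b₁), hδr, fun p hp => ?_⟩
    have hstrip : {s : Ann | ((s.2:ℝ)) ∈ Set.Ioi (1 - min δ₂ (1 - b₁))} ⊆ M₁ᶜ := by
      intro s hs hsM₁
      have := (hbound₁ _ hsM₁).2; have := min_le_right δ₂ (1 - b₁)
      simp only [Set.mem_setOf_eq, Set.mem_Ioi] at hs; linarith
    have hrmem : r ∈ connectedComponentIn M₁ᶜ r :=
      mem_connectedComponentIn (connectedComponentIn_subset _ _ hrW)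
    have : {s : Ann | ((s.2:ℝ)) ∈ Set.Ioi (1 - min δ₂ (1 - b₁))} ⊆ connectedComponentIn M₁ᶜ r :=
      (strip_preconnected _ (convex_Ioi _)).subset_connectedComponentIn hry hstrip
    rw [ccIn_eq_ccIn hrmem hrW] at this
    exact this hp
  exact no_both_ends hM₁ ⟨q, hqM₁, rfl⟩ hWleft hWright

/-- The relation `M₁ < M₂ ⟺ M₁ ⊆ A_L(M₂)` is a strict partial order on
any collection of pairwise disjoint separators of the open annulus: it is irreflexive,
antisymmetric, transitive, and any two disjoint separators are comparable. -/
theorem sepLt_strict_partial_order :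
    (∀ M : Set Ann, IsSeparator M → ¬ SepLt M M) ∧
    (∀ M₁ M₂ : Set Ann, IsSeparator M₁ → IsSeparator M₂ → Disjoint M₁ M₂ →
      ¬ (SepLt M₁ M₂ ∧ SepLt M₂ M₁)) ∧
    (∀ M₁ M₂ M₃ : Set Ann, IsSeparator M₁ → IsSeparator M₂ → IsSeparator M₃ →
      Disjoint M₁ M₂ → Disjoint M₂ M₃ → Disjoint M₁ M₃ →
      SepLt M₁ M₂ → SepLt M₂ M₃ → SepLt M₁ M₃) ∧
    (∀ M₁ M₂ : Set Ann, IsSeparator M₁ → IsSeparator M₂ → Disjoint M₁ M₂ →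
      SepLt M₁ M₂ ∨ SepLt M₂ M₁) := by
  refine ⟨fun M hM => sepLt_irrefl hM,
    fun M₁ M₂ h1 h2 hd => sepLt_antisymm h1 h2 hd,
    fun M₁ M₂ M₃ h1 h2 h3 d12 d23 d13 l12 l23 => sepLt_trans h1 h2 h3 d12 d23 d13 l12 l23,
    fun M₁ M₂ h1 h2 hd => sepLt_total h1 h2 hd⟩
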